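/- Let J be twice differentiable with J'' < 0 on [0,1], b₁ < b₂ in [0,1], and a* ∈ (b₁, b₂) with J'(a*) = (J(b₂) - J(b₁))/(b₂ - b₁). Then min over a ∈ [b₁,b₂] of max over p ∈ [b₁,b₂] of d(p‖a) equals d(b₁‖a*) = d(b₂‖a*), where d(p‖a) = -J(p) + J(a) + (p-a)·J'(a). -/

import Mathlib

/-- With `J'' < 0` on `[0,1]`, `b₁ < b₂` in `[0,1]`, and `a* ∈ (b₁,b₂)` with
`J'(a*) = (J(b₂)-J(b₁))/(b₂-b₁)`, the minimax value
`min_{a ∈ [b₁,b₂]} max_{p ∈ [b₁,b₂]} d(p‖a)` equals `d(b₁‖a*) = d(b₂‖a*)`. -/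
theorem minimax_value_equals_endpoint_divergence
    (J J' J'' : ℝ → ℝ)
    (hJ : ∀ x ∈ Set.Icc (0:ℝ) 1, HasDerivAt J (J' x) x)
    (hJ' : ∀ x ∈ Set.Icc (0:ℝ) 1, HasDerivAt J' (J'' x) x)
    (hJ'' : ∀ x ∈ Set.Icc (0:ℝ) 1, J'' x < 0)
    (b₁ b₂ : ℝ) (hb₁ : b₁ ∈ Set.Icc (0:ℝ) 1) (hb₂ : b₂ ∈ Set.Icc (0:ℝ) 1)
    (hlt : b₁ < b₂)
    (d : ℝ → ℝ → ℝ)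
    (hd : ∀ p a, d p a = -J p + J a + (p - a) * J' a)
    (astar : ℝ) (hastar : astar ∈ Set.Ioo b₁ b₂)
    (hslope : J' astar = (J b₂ - J b₁) / (b₂ - b₁)) :
    d b₁ astar = d b₂ astar ∧
      sInf {x : ℝ | ∃ a ∈ Set.Icc b₁ b₂,
          x = sSup ((fun p => d p a) '' Set.Icc b₁ b₂)} = d b₁ astar := by
  obtain ⟨ha1, ha2⟩ := hastar
  have h01 : Set.Icc b₁ b₂ ⊆ Set.Icc (0:ℝ) 1 := Set.Icc_subset_Icc hb₁.1 hb₂.2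
  have hb₁m : b₁ ∈ Set.Icc b₁ b₂ := ⟨le_refl _, hlt.le⟩
  have hb₂m : b₂ ∈ Set.Icc b₁ b₂ := ⟨hlt.le, le_refl _⟩
  have hastarm : astar ∈ Set.Icc b₁ b₂ := ⟨ha1.le, ha2.le⟩
  have hne : b₂ - b₁ ≠ 0 := sub_ne_zero.mpr hlt.ne'
  have hslope' : (b₂ - b₁) * J' astar = J b₂ - J b₁ := by
    field_simp at hslope; linarith [hslope]
  have heq : d b₁ astar = d b₂ astar := by
    rw [hd, hd]; nlinarith [hslope']
  refine ⟨heq, ?_⟩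
  have hJ'c : ContinuousOn J' (Set.Icc (0:ℝ) 1) :=
    fun x hx => (hJ' x hx).continuousAt.continuousWithinAt
  have hanti : StrictAntiOn J' (Set.Icc (0:ℝ) 1) := by
    apply strictAntiOn_of_deriv_neg (convex_Icc 0 1) hJ'c
    intro x hx
    rw [interior_Icc] at hx
    rw [(hJ' x (Set.Ioo_subset_Icc_self hx)).deriv]
    exact hJ'' x (Set.Ioo_subset_Icc_self hx)
  -- convexity of `p ↦ d p a` on `[0,1]`
  have hconv : ∀ a : ℝ, ConvexOn ℝ (Set.Icc (0:ℝ) 1) (fun p => d p a) := by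
    intro a
    have hD : ∀ p ∈ Set.Icc (0:ℝ) 1, HasDerivAt (fun p => d p a) (-J' p + J' a) p := by
      intro p hp
      have h2 : HasDerivAt (fun p : ℝ => (p - a) * J' a) (J' a) p := by
        simpa using ((hasDerivAt_id p).sub_const a).mul_const (J' a)
      have h3 : HasDerivAt (fun p => -J p + J a + (p - a) * J' a) (-J' p + J' a) p := by
        exact (((hJ p hp).neg).add_const (J a)).add h2
      have hfe : (fun p => d p a) = fun p => -J p + J a + (p - a) * J' a := by
        funext q; rw [hd]
      rw [hfe]; exact h3
    apply MonotoneOn.convexOn_of_deriv (convex_Icc 0 1)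
    · exact fun x hx => (hD x hx).continuousAt.continuousWithinAt
    · exact fun x hx => (hD x (interior_subset hx)).differentiableAt.differentiableWithinAt
    · intro x hx y hy hxy
      rw [interior_Icc] at hx hy
      rw [(hD x (Set.Ioo_subset_Icc_self hx)).deriv, (hD y (Set.Ioo_subset_Icc_self hy)).deriv]
      rcases eq_or_lt_of_le hxy with rfl | hxy'
      · exact le_refl _
      · have := hanti (Set.Ioo_subset_Icc_self hx) (Set.Ioo_subset_Icc_self hy) hxy'
        linarith
  -- sup over p is attained at the endpoints
  have hbdd : ∀ a : ℝ, ∀ x ∈ (fun p => d p a) '' Set.Icc b₁ b₂, x ≤ max (d b₁ a) (d b₂ a) := by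
    rintro a x ⟨p, hp, rfl⟩
    exact (hconv a).le_on_segment (h01 hb₁m) (h01 hb₂m) ((segment_eq_Icc hlt.le).symm ▸ hp)
  have hmax : ∀ a : ℝ, sSup ((fun p => d p a) '' Set.Icc b₁ b₂) = max (d b₁ a) (d b₂ a) := by
    intro a
    apply le_antisymm
    · exact csSup_le ((Set.nonempty_Icc.mpr hlt.le).image _) (hbdd a)
    · exact max_le (le_csSup ⟨_, hbdd a⟩ ⟨b₁, hb₁m, rfl⟩) (le_csSup ⟨_, hbdd a⟩ ⟨b₂, hb₂m, rfl⟩)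
  -- derivative of `a ↦ d p₀ a` is `(p₀ - a) * J'' a`
  have hDa : ∀ p₀ : ℝ, ∀ x ∈ Set.Icc (0:ℝ) 1,
      HasDerivAt (fun a => d p₀ a) ((p₀ - x) * J'' x) x := by
    intro p₀ x hx
    have h2 : HasDerivAt (fun a : ℝ => (p₀ - a) * J' a)
        ((-1) * J' x + (p₀ - x) * J'' x) x :=
      (((hasDerivAt_id x).const_sub p₀).mul (hJ' x hx))
    have h3 : HasDerivAt (fun a => -J p₀ + J a + (p₀ - a) * J' a)
        (J' x + ((-1) * J' x + (p₀ - x) * J'' x)) x := by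
      exact ((hJ x hx).const_add (-J p₀)).add h2
    have hfe : (fun a => d p₀ a) = fun a => -J p₀ + J a + (p₀ - a) * J' a := by
      funext q; rw [hd]
    rw [hfe]
    convert h3 using 1; ring
  -- `a ↦ d b₁ a` is monotone on `[astar, b₂]`
  have hmono : MonotoneOn (fun a => d b₁ a) (Set.Icc astar b₂) := by
    have hsub : Set.Icc astar b₂ ⊆ Set.Icc (0:ℝ) 1 :=
      Set.Icc_subset_Icc (h01 hastarm).1 hb₂.2
    apply monotoneOn_of_deriv_nonneg (convex_Icc _ _)
    · exact fun x hx => (hDa b₁ x (hsub hx)).continuousAt.continuousWithinAt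
    · exact fun x hx =>
        (hDa b₁ x (hsub (interior_subset hx))).differentiableAt.differentiableWithinAt
    · intro x hx
      rw [interior_Icc] at hx
      rw [(hDa b₁ x (hsub (Set.Ioo_subset_Icc_self hx))).deriv]
      have h1 : b₁ - x < 0 := by linarith [hx.1]
      have h2 := hJ'' x (hsub (Set.Ioo_subset_Icc_self hx))
      nlinarith
  -- `a ↦ d b₂ a` is antitone on `[b₁, astar]`
  have hantid : AntitoneOn (fun a => d b₂ a) (Set.Icc b₁ astar) := by
    have hsub : Set.Icc b₁ astar ⊆ Set.Icc (0:ℝ) 1 :=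
      Set.Icc_subset_Icc hb₁.1 (h01 hastarm).2
    apply antitoneOn_of_deriv_nonpos (convex_Icc _ _)
    · exact fun x hx => (hDa b₂ x (hsub hx)).continuousAt.continuousWithinAt
    · exact fun x hx =>
        (hDa b₂ x (hsub (interior_subset hx))).differentiableAt.differentiableWithinAt
    · intro x hx
      rw [interior_Icc] at hx
      rw [(hDa b₂ x (hsub (Set.Ioo_subset_Icc_self hx))).deriv]
      have h1 : 0 < b₂ - x := by linarith [hx.2]
      have h2 := hJ'' x (hsub (Set.Ioo_subset_Icc_self hx))
      nlinarith
  -- conclude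
  have hlb : ∀ x ∈ {x : ℝ | ∃ a ∈ Set.Icc b₁ b₂,
      x = sSup ((fun p => d p a) '' Set.Icc b₁ b₂)}, d b₁ astar ≤ x := by
    rintro x ⟨a, ha, rfl⟩
    rw [hmax a]
    rcases le_total a astar with h | h
    · refine le_max_of_le_right ?_
      rw [heq]
      exact hantid ⟨ha.1, h⟩ ⟨ha1.le, le_refl _⟩ h
    · exact le_max_of_le_left (hmono ⟨le_refl _, ha2.le⟩ ⟨h, ha.2⟩ h)
  have hmem : d b₁ astar ∈ {x : ℝ | ∃ a ∈ Set.Icc b₁ b₂,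
      x = sSup ((fun p => d p a) '' Set.Icc b₁ b₂)} := by
    refine ⟨astar, hastarm, ?_⟩
    rw [hmax astar, ← heq, max_self]
  exact le_antisymm (csInf_le ⟨d b₁ astar, hlb⟩ hmem) (le_csInf ⟨_, hmem⟩ hlb)
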